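/- Let (X,d) be a metric space and μ a Borel measure on X. Let 1 < Q < ∞ and suppose μ(B(x,r)) ≤ C·r^Q for all x ∈ X and r > 0 (closed balls), where C > 0 is a fixed constant. Let A ⊆ X be a compact set whose Hausdorff dimension satisfies dim_H(A) < Q − 1. Then M_1(Γ_A) = 0, where Γ_A is the family of all curves parametrized by arc length whose image intersects A; that is, for every ε > 0 there exists a Borel function ρ : X → [0,∞] with ∫_X ρ dμ ≤ ε such that ∫_0^L ρ(c(t)) dt ≥ 1 for every L > 0 and every curve c : [0,L] → X parametrized by arc length with image meeting A. -/

import Mathlib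

open MeasureTheory Set Metric
open scoped ENNReal

lemma tsum_inv_two_pow_succ : ∑' j : ℕ, ((2:ℝ≥0∞))⁻¹ ^ (j+1) = 1 := by
  have : ∀ j : ℕ, ((2:ℝ≥0∞))⁻¹ ^ (j+1) = 2⁻¹ * 2⁻¹ ^ j := fun j => pow_succ' _ _
  simp_rw [this]
  rw [ENNReal.tsum_mul_left, ENNReal.tsum_geometric, ENNReal.one_sub_inv_two, inv_inv,
    ENNReal.inv_mul_cancel two_ne_zero ENNReal.ofNat_ne_top]

lemma cover_of_null {X : Type*} [MetricSpace X] [MeasurableSpace X] [BorelSpace X]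
    {A : Set X} {s : ℝ} (hs : 0 < s)
    (h0 : μH[s] A = 0) (hA : A.Nonempty) {δ : ℝ} (hδ : 0 < δ) {κ : ℝ≥0∞} (hκ : 0 < κ) :
    ∃ (x : ℕ → X) (r : ℕ → ℝ), (∀ n, 0 ≤ r n ∧ r n ≤ δ) ∧
      (A ⊆ ⋃ n, closedBall (x n) (r n)) ∧ ∑' n, ENNReal.ofReal (r n ^ s) < κ := by
  rw [MeasureTheory.Measure.hausdorffMeasure_apply] at h0
  have hinf : (⨅ (t : ℕ → Set X) (_ : A ⊆ ⋃ n, t n)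
      (_ : ∀ n, EMetric.diam (t n) ≤ ENNReal.ofReal δ),
      ∑' n, ⨆ _ : (t n).Nonempty, EMetric.diam (t n) ^ s) = 0 := by
    refine le_antisymm ?_ zero_le
    rw [← h0]
    refine le_iSup₂ (f := fun (r : ℝ≥0∞) (_ : 0 < r) => ⨅ (t : ℕ → Set X) (_ : A ⊆ ⋃ n, t n)
      (_ : ∀ n, EMetric.diam (t n) ≤ r),
      ∑' n, ⨆ _ : (t n).Nonempty, EMetric.diam (t n) ^ s) (ENNReal.ofReal δ) ?_
    exact ENNReal.ofReal_pos.2 hδ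
  have hlt : (⨅ (t : ℕ → Set X) (_ : A ⊆ ⋃ n, t n)
      (_ : ∀ n, EMetric.diam (t n) ≤ ENNReal.ofReal δ),
      ∑' n, ⨆ _ : (t n).Nonempty, EMetric.diam (t n) ^ s) < κ := hinf ▸ hκ
  rw [iInf_lt_iff] at hlt
  obtain ⟨t, hlt⟩ := hlt
  rw [iInf_lt_iff] at hlt
  obtain ⟨hcov, hlt⟩ := hlt
  rw [iInf_lt_iff] at hlt
  obtain ⟨hdiam, hlt⟩ := hlt
  classical
  refine ⟨fun n => if h : (t n).Nonempty then h.some else hA.some,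
    fun n => (EMetric.diam (t n)).toReal, fun n => ⟨ENNReal.toReal_nonneg, ?_⟩, ?_, ?_⟩
  · exact ENNReal.toReal_le_of_le_ofReal hδ.le (hdiam n)
  · intro a ha
    obtain ⟨n, hn⟩ : ∃ n, a ∈ t n := by simpa using hcov ha
    refine mem_iUnion.2 ⟨n, ?_⟩
    have hne : (t n).Nonempty := ⟨a, hn⟩
    simp only [dif_pos hne]
    rw [mem_closedBall, dist_edist]
    refine ENNReal.toReal_mono ?_ (EMetric.edist_le_diam_of_mem hn hne.some_mem)
    exact ((hdiam n).trans_lt ENNReal.ofReal_lt_top).ne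
  · refine lt_of_le_of_lt (ENNReal.tsum_le_tsum fun n => ?_) hlt
    by_cases hne : (t n).Nonempty
    · rw [iSup_pos hne]
      rw [← ENNReal.ofReal_rpow_of_nonneg ENNReal.toReal_nonneg hs.le] at *
      rw [ENNReal.ofReal_toReal ((hdiam n).trans_lt ENNReal.ofReal_lt_top).ne]
    · rw [not_nonempty_iff_eq_empty] at hne
      simp [hne, Real.zero_rpow hs.ne', EMetric.diam, Metric.ediam_empty]

/-- A curve `c : [0,L] → X` parametrized by arc length: `c` is 1-Lipschitz on `[0,L]`
and its length (total variation) on each subinterval `[s,t] ⊆ [0,L]` equals `t - s`. -/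
def IsArcLengthParam {X : Type*} [PseudoMetricSpace X] (L : ℝ) (c : ℝ → X) : Prop :=
  LipschitzOnWith 1 c (Icc 0 L) ∧
    ∀ s t : ℝ, 0 ≤ s → s ≤ t → t ≤ L →
      eVariationOn c (Icc s t) = ENNReal.ofReal (t - s)

/-- Let `(X,d)` be a metric space, `μ` a Borel measure with
`μ(B(x,r)) ≤ C·r^Q` (closed balls), `1 < Q`, and `A ⊆ X` compact with Hausdorff
dimension `dim_H(A) < Q - 1`. Then the family of arc-length parametrized curves
meeting `A` has zero `1`-modulus: for every `ε > 0` there is a Borel `ρ : X → [0,∞]`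
with `∫ ρ dμ ≤ ε` and `∫_0^L ρ(c(t)) dt ≥ 1` for every arc-length parametrized curve
`c : [0,L] → X` whose image meets `A`. -/
theorem stmt6 {X : Type*} [MetricSpace X] [MeasurableSpace X] [BorelSpace X]
    (μ : Measure X) (Q C : ℝ) (hQ : 1 < Q) (hC : 0 < C)
    (hgrowth : ∀ (x : X) (r : ℝ), 0 < r →
      μ (closedBall x r) ≤ ENNReal.ofReal (C * r ^ Q))
    (A : Set X) (hAc : IsCompact A) (hdim : dimH A < ENNReal.ofReal (Q - 1)) :
    ∀ ε : ℝ≥0∞, 0 < ε → ∃ ρ : X → ℝ≥0∞, Measurable ρ ∧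
      (∫⁻ x, ρ x ∂μ) ≤ ε ∧
      ∀ L : ℝ, 0 < L → ∀ c : ℝ → X, IsArcLengthParam L c →
        (∃ t ∈ Icc 0 L, c t ∈ A) →
        1 ≤ ∫⁻ t in Icc 0 L, ρ (c t) ∂volume := by
  intro ε hε
  rcases A.eq_empty_or_nonempty with rfl | hA
  · exact ⟨0, measurable_const, by simp, fun L hL c hc h => by simp at h⟩
  -- choose exponent s
  obtain ⟨b, hb1, hb2⟩ := exists_between hdim
  set s : ℝ := b.toReal with hs_def
  have hbtop : b ≠ ⊤ := (hb2.trans ENNReal.ofReal_lt_top).ne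
  have hs_pos : 0 < s := by
    refine ENNReal.toReal_pos ?_ hbtop
    exact (pos_of_gt hb1).ne'   -- b > dimH A ≥ 0
  have hsQ : s < Q - 1 := by
    have := hb2
    rw [← ENNReal.ofReal_toReal hbtop] at this
    exact (ENNReal.ofReal_lt_ofReal_iff (by linarith)).1 this
  have h0 : μH[s] A = 0 := by
    have h := hausdorffMeasure_of_dimH_lt (s := A) (d := b.toNNReal)
      (by rwa [ENNReal.coe_toNNReal hbtop])
    exact h
  -- constants
  set K : ℝ≥0∞ := ENNReal.ofReal (C * 2 ^ Q) with hK_def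
  have hK0 : K ≠ 0 := by
    simp only [hK_def, ne_eq, ENNReal.ofReal_eq_zero, not_le]
    positivity
  have hKtop : K ≠ ⊤ := ENNReal.ofReal_ne_top
  set M : ℝ≥0∞ := (min ε 1) / K with hM_def
  have hM0 : 0 < M := ENNReal.div_pos (lt_min hε one_pos).ne' hKtop
  have hKM : K * M ≤ ε := by
    rw [hM_def, ENNReal.mul_div_cancel hK0 hKtop]
    exact min_le_left _ _
  have hMtop : M ≠ ⊤ := (ENNReal.div_lt_top (by simp [ENNReal.one_ne_top]) hK0).ne
  -- covers at each scale
  have hcovers : ∀ j : ℕ, ∃ (x : ℕ → X) (r : ℕ → ℝ),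
      (∀ n, 0 ≤ r n ∧ r n ≤ (2:ℝ)⁻¹ ^ (j+1)) ∧
      (A ⊆ ⋃ n, closedBall (x n) (r n)) ∧
      ∑' n, ENNReal.ofReal (r n ^ s) < M * 2⁻¹ ^ (j+2) := by
    intro j
    refine cover_of_null hs_pos h0 hA (by positivity) ?_
    exact ENNReal.mul_pos hM0.ne' (by simp)
  choose x r hr hcov hsum using hcovers
  -- padding radii
  set b' : ℕ → ℕ → ℝ := fun j n => ((M * 2⁻¹ ^ (j+n+3)) ⊓ 1).toReal ^ (1/s) with hb'_def
  have hb'_pos : ∀ j n, 0 < b' j n := by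
    intro j n
    refine Real.rpow_pos_of_pos ?_ _
    refine ENNReal.toReal_pos ?_ ?_
    · exact (lt_min (ENNReal.mul_pos hM0.ne' (by simp)) one_pos).ne'
    · exact ((min_le_right _ _).trans_lt (by simp [ENNReal.one_lt_top])).ne
  have hb'_s : ∀ j n, ENNReal.ofReal (b' j n ^ s) ≤ M * 2⁻¹ ^ (j+n+3) := by
    intro j n
    have hm : ((M * 2⁻¹ ^ (j+n+3)) ⊓ 1) ≠ ⊤ :=
      ((min_le_right _ _).trans_lt (by simp [ENNReal.one_lt_top])).ne
    have : b' j n ^ s = ((M * 2⁻¹ ^ (j+n+3)) ⊓ 1).toReal := by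
      show (((M * 2⁻¹ ^ (j+n+3)) ⊓ 1).toReal ^ (1/s)) ^ s = _
      rw [← Real.rpow_mul ENNReal.toReal_nonneg, one_div_mul_cancel hs_pos.ne',
        Real.rpow_one]
    rw [this, ENNReal.ofReal_toReal hm]
    exact min_le_left _ _
  -- combined radii
  set R : ℕ → ℕ → ℝ := fun j n => min ((2:ℝ)⁻¹ ^ (j+1)) (max (r j n) (b' j n)) with hR_def
  have hR_pos : ∀ j n, 0 < R j n := fun j n =>
    lt_min (by positivity) ((hb'_pos j n).trans_le (le_max_right _ _))
  have hR_le : ∀ j n, R j n ≤ (2:ℝ)⁻¹ ^ (j+1) := fun j n => min_le_left _ _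
  have hR_le1 : ∀ j n, R j n ≤ 1 := by
    intro j n
    refine (hR_le j n).trans ?_
    calc ((2:ℝ)⁻¹) ^ (j+1) ≤ (2:ℝ)⁻¹ ^ 0 :=
          pow_le_pow_of_le_one (by norm_num) (by norm_num) (Nat.zero_le _)
      _ = 1 := pow_zero _
  have hrR : ∀ j n, r j n ≤ R j n := fun j n =>
    le_min (hr j n).2 (le_max_left _ _)
  have hRs : ∀ j n, ENNReal.ofReal (R j n ^ s) ≤
      ENNReal.ofReal (r j n ^ s) + ENNReal.ofReal (b' j n ^ s) := by
    intro j n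
    rcases le_total (r j n) (b' j n) with h | h
    · refine le_add_left (ENNReal.ofReal_le_ofReal ?_)
      refine Real.rpow_le_rpow (hR_pos j n).le ?_ hs_pos.le
      exact (min_le_right _ _).trans (max_le h le_rfl)
    · refine le_add_right (ENNReal.ofReal_le_ofReal ?_)
      refine Real.rpow_le_rpow (hR_pos j n).le ?_ hs_pos.le
      exact (min_le_right _ _).trans (max_le le_rfl h)
  -- the admissible function
  set F : ℕ → ℕ → X → ℝ≥0∞ := fun j n =>
    (closedBall (x j n) (2 * R j n)).indicator (fun _ => (ENNReal.ofReal (R j n))⁻¹)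
    with hF_def
  have hFmeas : ∀ j n, Measurable (F j n) := fun j n =>
    Measurable.indicator measurable_const measurableSet_closedBall
  refine ⟨fun y => ∑' p : ℕ × ℕ, F p.1 p.2 y, ?_, ?_, ?_⟩
  · exact Measurable.ennreal_tsum fun p => hFmeas p.1 p.2
  · -- integral bound
    have hterm : ∀ j n : ℕ, ∫⁻ y, F j n y ∂μ ≤
        K * (ENNReal.ofReal (r j n ^ s) + ENNReal.ofReal (b' j n ^ s)) := by
      intro j n
      rw [hF_def]
      rw [lintegral_indicator_const measurableSet_closedBall]
      have h1 : μ (closedBall (x j n) (2 * R j n)) ≤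
          ENNReal.ofReal (C * (2 * R j n) ^ Q) :=
        hgrowth _ _ (by have := hR_pos j n; positivity)
      have h2 : (R j n : ℝ) ^ Q = (R j n) ^ (Q-1) * (R j n) ^ (1:ℝ) := by
        rw [← Real.rpow_add (hR_pos j n)]; norm_num
      have hre : C * (2 * R j n) ^ Q = (C * 2 ^ Q * R j n ^ (Q-1)) * R j n := by
        rw [Real.mul_rpow (by norm_num) (hR_pos j n).le, h2, Real.rpow_one]; ring
      have hof : ENNReal.ofReal (C * (2 * R j n) ^ Q) =
          (K * ENNReal.ofReal (R j n ^ (Q-1))) * ENNReal.ofReal (R j n) := by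
        rw [hre, ENNReal.ofReal_mul (by positivity), ENNReal.ofReal_mul (by positivity), hK_def]
      calc (ENNReal.ofReal (R j n))⁻¹ * μ (closedBall (x j n) (2 * R j n))
          ≤ (ENNReal.ofReal (R j n))⁻¹ *
            ((K * ENNReal.ofReal (R j n ^ (Q-1))) * ENNReal.ofReal (R j n)) := by
            exact mul_le_mul_right (h1.trans_eq hof) _
        _ = K * ENNReal.ofReal (R j n ^ (Q-1)) := by
            rw [mul_comm ((ENNReal.ofReal (R j n))⁻¹) _, mul_assoc,
              ENNReal.mul_inv_cancel (ENNReal.ofReal_pos.2 (hR_pos j n)).ne'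
                ENNReal.ofReal_ne_top, mul_one]
        _ ≤ K * ENNReal.ofReal (R j n ^ s) := by
            refine mul_le_mul_right (ENNReal.ofReal_le_ofReal ?_) _
            exact Real.rpow_le_rpow_of_exponent_ge (hR_pos j n) (hR_le1 j n) hsQ.le
        _ ≤ K * (ENNReal.ofReal (r j n ^ s) + ENNReal.ofReal (b' j n ^ s)) :=
            mul_le_mul_right (hRs j n) _
    have hsum2 : ∀ j : ℕ, ∑' n, ENNReal.ofReal (b' j n ^ s) ≤ M * 2⁻¹ ^ (j+2) := by
      intro j
      have heq : ∀ n : ℕ, M * (2:ℝ≥0∞)⁻¹ ^ (j+n+3) = M * 2⁻¹ ^ (j+3) * 2⁻¹ ^ n := by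
        intro n
        rw [show j+n+3 = (j+3)+n from by ring, pow_add, mul_assoc]
      calc ∑' n, ENNReal.ofReal (b' j n ^ s) ≤ ∑' n, M * (2:ℝ≥0∞)⁻¹ ^ (j+n+3) :=
            ENNReal.tsum_le_tsum fun n => hb'_s j n
        _ = M * 2⁻¹ ^ (j+3) * ∑' n : ℕ, (2:ℝ≥0∞)⁻¹ ^ n := by
            simp_rw [heq]; rw [ENNReal.tsum_mul_left]
        _ = M * 2⁻¹ ^ (j+2) := by
            rw [ENNReal.tsum_geometric, ENNReal.one_sub_inv_two, inv_inv]
            rw [pow_succ (2⁻¹ : ℝ≥0∞) (j+2), mul_assoc M, mul_assoc ((2:ℝ≥0∞)⁻¹ ^ (j+2)),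
              ENNReal.inv_mul_cancel two_ne_zero ENNReal.ofNat_ne_top, mul_one]
    have hsumM : ∑' (p : ℕ × ℕ),
        (ENNReal.ofReal (r p.1 p.2 ^ s) + ENNReal.ofReal (b' p.1 p.2 ^ s)) ≤ M := by
      rw [ENNReal.tsum_prod (f := fun j n => ENNReal.ofReal (r j n ^ s) + ENNReal.ofReal (b' j n ^ s))]
      calc ∑' (j : ℕ) (n : ℕ), (ENNReal.ofReal (r j n ^ s) + ENNReal.ofReal (b' j n ^ s))
          = ∑' j : ℕ, (∑' n, ENNReal.ofReal (r j n ^ s) + ∑' n, ENNReal.ofReal (b' j n ^ s)) := by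
            refine tsum_congr fun j => ENNReal.tsum_add
        _ ≤ ∑' j : ℕ, M * 2⁻¹ ^ (j+1) := by
            refine ENNReal.tsum_le_tsum fun j => ?_
            have h21 : (2:ℝ≥0∞) * 2⁻¹ = 1 :=
              ENNReal.mul_inv_cancel two_ne_zero ENNReal.ofNat_ne_top
            have : (M * 2⁻¹ ^ (j+2)) + (M * 2⁻¹ ^ (j+2)) = M * 2⁻¹ ^ (j+1) := by
              calc (M * 2⁻¹ ^ (j+2)) + (M * 2⁻¹ ^ (j+2))
                  = ((2:ℝ≥0∞) * 2⁻¹) * (M * 2⁻¹ ^ (j+1)) := by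
                    rw [pow_succ (2⁻¹ : ℝ≥0∞) (j+1)]; ring
                _ = M * 2⁻¹ ^ (j+1) := by rw [h21, one_mul]
            rw [← this]
            exact add_le_add (hsum j).le (hsum2 j)
        _ = M := by rw [ENNReal.tsum_mul_left, tsum_inv_two_pow_succ, mul_one]
    calc ∫⁻ y, ∑' p : ℕ × ℕ, F p.1 p.2 y ∂μ = ∑' p : ℕ × ℕ, ∫⁻ y, F p.1 p.2 y ∂μ :=
          lintegral_tsum fun p => (hFmeas p.1 p.2).aemeasurable
      _ ≤ ∑' p : ℕ × ℕ, K * (ENNReal.ofReal (r p.1 p.2 ^ s) + ENNReal.ofReal (b' p.1 p.2 ^ s)) :=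
          ENNReal.tsum_le_tsum fun p => hterm p.1 p.2
      _ = K * ∑' p : ℕ × ℕ, (ENNReal.ofReal (r p.1 p.2 ^ s) + ENNReal.ofReal (b' p.1 p.2 ^ s)) :=
          ENNReal.tsum_mul_left
      _ ≤ K * M := mul_le_mul_right hsumM _
      _ ≤ ε := hKM
  · -- admissibility
    rintro L hL c hc ⟨t0, ht0, ha⟩
    obtain ⟨j, hj⟩ : ∃ j : ℕ, ((2:ℝ)⁻¹) ^ j < L :=
      exists_pow_lt_of_lt_one hL (by norm_num)
    have hδL : ((2:ℝ)⁻¹) ^ (j+1) ≤ L :=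
      (pow_le_pow_of_le_one (by norm_num) (by norm_num) (Nat.le_succ j)).trans hj.le
    obtain ⟨n, hn⟩ := mem_iUnion.1 (hcov j ha)
    have hRL : R j n ≤ L := (hR_le j n).trans hδL
    have hRpos := hR_pos j n
    set m1 := max 0 (t0 - R j n) with hm1
    set m2 := min L (t0 + R j n) with hm2
    have hm : m1 + R j n ≤ m2 := by
      have h1 : m1 ≤ t0 := max_le ht0.1 (by linarith)
      have h2 : m1 ≤ L - R j n := max_le (by linarith) (by linarith [ht0.2])
      exact le_min (by linarith) (by linarith)
    have hsub : Icc m1 m2 ⊆ Icc 0 L := Icc_subset_Icc (le_max_left 0 _) (min_le_left _ _)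
    have hmem : ∀ t ∈ Icc m1 m2, c t ∈ closedBall (x j n) (2 * R j n) := by
      intro t ht
      have habs : |t - t0| ≤ R j n := by
        rw [abs_le]
        constructor
        · have := ht.1; have := le_max_right 0 (t0 - R j n); linarith [hm1 ▸ this]
        · have := ht.2; have := min_le_right L (t0 + R j n); linarith
      have hd : dist (c t) (c t0) ≤ 1 * dist t t0 :=
        hc.1.dist_le_mul t (hsub ht) t0 ht0
      rw [one_mul, Real.dist_eq] at hd
      have hd2 : dist (c t0) (x j n) ≤ r j n := hn
      rw [mem_closedBall]
      calc dist (c t) (x j n) ≤ dist (c t) (c t0) + dist (c t0) (x j n) := dist_triangle _ _ _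
        _ ≤ R j n + R j n := add_le_add (hd.trans habs) (hd2.trans (hrR j n))
        _ = 2 * R j n := by ring
    have hkey : ∀ t : ℝ, (Icc m1 m2).indicator (fun _ => (ENNReal.ofReal (R j n))⁻¹) t ≤
        ∑' p : ℕ × ℕ, F p.1 p.2 (c t) := by
      intro t
      by_cases ht : t ∈ Icc m1 m2
      · rw [indicator_of_mem ht]
        refine le_trans ?_ (ENNReal.le_tsum (⟨j, n⟩ : ℕ × ℕ))
        show _ ≤ F j n (c t)
        simp only [hF_def]
        exact le_of_eq (indicator_of_mem (hmem t ht) (fun _ => (ENNReal.ofReal (R j n))⁻¹)).symm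
      · rw [indicator_of_notMem ht]; exact zero_le
    have hO : (ENNReal.ofReal (R j n)) ≠ 0 := (ENNReal.ofReal_pos.2 hRpos).ne'
    calc (1:ℝ≥0∞) = (ENNReal.ofReal (R j n))⁻¹ * ENNReal.ofReal (R j n) :=
          (ENNReal.inv_mul_cancel hO ENNReal.ofReal_ne_top).symm
      _ ≤ (ENNReal.ofReal (R j n))⁻¹ * volume (Icc m1 m2) := by
          rw [Real.volume_Icc]
          exact mul_le_mul_right (ENNReal.ofReal_le_ofReal (by linarith)) _
      _ = ∫⁻ t in Icc 0 L, (Icc m1 m2).indicator (fun _ => (ENNReal.ofReal (R j n))⁻¹) t := by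
          rw [lintegral_indicator_const measurableSet_Icc,
            Measure.restrict_apply measurableSet_Icc,
            inter_eq_self_of_subset_left hsub]
      _ ≤ ∫⁻ t in Icc 0 L, ∑' p : ℕ × ℕ, F p.1 p.2 (c t) :=
          lintegral_mono hkey
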